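/- arXiv:0801.2242 — 2 statements merged into one kernel-verified Lean document; each statement's English description precedes it below -/
import Mathlib

section
/- Let X and Y be finite sets, V : X → PMF(Y) a channel, and Φ = (N, φ, {D_i}) a code with encoder φ : {1,…,N} → X and pairwise disjoint decoding sets D_i ⊆ Y, with average error probability P_e(Φ) = (1/N) Σ_{i=1}^N (1 − V_{φ(i)}(D_i)). Then for every probability distribution Q on Y and every a > 0, 1 − P_e(Φ) ≤ a/N + (1/N) Σ_{i=1}^N V_{φ(i)}{ y : V_{φ(i)}(y) ≥ a·Q(y) }. -/
open scoped BigOperators Classical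

/-- `P` is a probability distribution on the finite type `Z`. -/
def IsDist {Z : Type} [Fintype Z] (P : Z → ℝ) : Prop :=
  (∀ z, 0 ≤ P z) ∧ ∑ z, P z = 1

/-- `V` is a channel: every row is a probability distribution. -/
def IsChannel {A B : Type} [Fintype B] (V : A → B → ℝ) : Prop := ∀ x, IsDist (V x)

/-- Single-shot converse bound: for a code `(N, φ, {D_i})` with pairwise disjoint
decoding sets, any output distribution `Q` and any `a > 0`,
`1 − Pₑ(Φ) ≤ a/N + (1/N) Σᵢ V_{φ(i)}{ y : V_{φ(i)}(y) ≥ a Q(y) }`. -/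
theorem single_shot_converse
    {X Y : Type} [Fintype X] [Fintype Y]
    (V : X → Y → ℝ) (hV : IsChannel V)
    (N : ℕ) (hN : 0 < N)
    (φ : Fin N → X) (D : Fin N → Finset Y)
    (hdisj : ∀ i j : Fin N, i ≠ j → Disjoint (D i) (D j))
    (Q : Y → ℝ) (hQ : IsDist Q)
    (a : ℝ) (ha : 0 < a) :
    1 - (1 / (N : ℝ)) * ∑ i, (1 - ∑ y ∈ D i, V (φ i) y) ≤
      a / N + (1 / (N : ℝ)) *
        ∑ i, ∑ y ∈ Finset.univ.filter (fun y => a * Q y ≤ V (φ i) y), V (φ i) y := by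
  have hNpos : (0:ℝ) < N := by exact_mod_cast hN
  have hVnn : ∀ x y, 0 ≤ V x y := fun x y => (hV x).1 y
  have hLHS : 1 - (1 / (N : ℝ)) * ∑ i, (1 - ∑ y ∈ D i, V (φ i) y)
      = (1 / (N : ℝ)) * ∑ i : Fin N, ∑ y ∈ D i, V (φ i) y := by
    rw [Finset.sum_sub_distrib, Finset.sum_const, Finset.card_univ, Fintype.card_fin,
      nsmul_eq_mul, mul_one]
    field_simp
    ring
  rw [hLHS]
  -- split each D i
  have hsplit : ∀ i : Fin N, ∑ y ∈ D i, V (φ i) y ≤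
      a * (∑ y ∈ D i, Q y) +
      ∑ y ∈ Finset.univ.filter (fun y => a * Q y ≤ V (φ i) y), V (φ i) y := by
    intro i
    rw [← Finset.sum_filter_add_sum_filter_not (D i) (fun y => a * Q y ≤ V (φ i) y)]
    rw [add_comm (a * _)]
    refine add_le_add ?_ ?_
    · refine Finset.sum_le_sum_of_subset_of_nonneg ?_ (fun y _ _ => hVnn _ y)
      exact Finset.filter_subset_filter _ (Finset.subset_univ _)
    · calc ∑ y ∈ (D i).filter (fun y => ¬ a * Q y ≤ V (φ i) y), V (φ i) y
          ≤ ∑ y ∈ (D i).filter (fun y => ¬ a * Q y ≤ V (φ i) y), a * Q y :=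
            Finset.sum_le_sum fun y hy =>
              le_of_lt (lt_of_not_ge (Finset.mem_filter.mp hy).2)
        _ ≤ a * ∑ y ∈ D i, Q y := by
            rw [Finset.mul_sum]
            exact Finset.sum_le_sum_of_subset_of_nonneg (Finset.filter_subset _ _)
              (fun y _ _ => mul_nonneg ha.le (hQ.1 y))
  -- disjointness: total Q mass over all D i is ≤ 1
  have hQsum : ∑ i : Fin N, ∑ y ∈ D i, Q y ≤ 1 := by
    classical
    have hds : Set.PairwiseDisjoint (Finset.univ : Finset (Fin N)) D := by
      intro i _ j _ hij
      exact hdisj i j hij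
    rw [← Finset.sum_biUnion hds]
    rw [← hQ.2]
    exact Finset.sum_le_sum_of_subset_of_nonneg (Finset.subset_univ _)
      (fun y _ _ => hQ.1 y)
  calc (1 / (N : ℝ)) * ∑ i : Fin N, ∑ y ∈ D i, V (φ i) y
      ≤ (1 / (N : ℝ)) * ∑ i : Fin N, (a * (∑ y ∈ D i, Q y) +
          ∑ y ∈ Finset.univ.filter (fun y => a * Q y ≤ V (φ i) y), V (φ i) y) := by
        exact mul_le_mul_of_nonneg_left (Finset.sum_le_sum fun i _ => hsplit i)
          (by positivity)
    _ = (1 / (N : ℝ)) * (a * ∑ i : Fin N, ∑ y ∈ D i, Q y) +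
        (1 / (N : ℝ)) * ∑ i, ∑ y ∈ Finset.univ.filter (fun y => a * Q y ≤ V (φ i) y),
          V (φ i) y := by
        rw [Finset.sum_add_distrib, ← Finset.mul_sum, mul_add]
    _ ≤ a / N + (1 / (N : ℝ)) *
        ∑ i, ∑ y ∈ Finset.univ.filter (fun y => a * Q y ≤ V (φ i) y), V (φ i) y := by
        gcongr
        calc (1 / (N : ℝ)) * (a * ∑ i : Fin N, ∑ y ∈ D i, Q y)
            ≤ (1 / (N : ℝ)) * (a * 1) := by
              apply mul_le_mul_of_nonneg_left _ (by positivity)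
              exact mul_le_mul_of_nonneg_left hQsum ha.le
          _ = a / N := by ring
end

section
/- Let X and Y be finite sets, V : X → PMF(Y) a channel, P a probability distribution on X, N ≥ 1 an integer, and c > 0. For a codebook z = (z₁,…,z_N) ∈ X^N define decoding sets inductively by D_i(z) = { y : V_{z_i}(y) > c·V_P(y) } \ (D_1(z) ∪ … ∪ D_{i−1}(z)), and let P_e(z) = (1/N) Σ_{i=1}^N (1 − V_{z_i}(D_i(z))). Then the expectation of P_e(z) when z₁,…,z_N are drawn i.i.d. from P satisfies E_{z∼P^{⊗N}}[P_e(z)] ≤ Σ_x P(x) · V_x{ y : V_x(y) ≤ c·V_P(y) } + N/(2c). -/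
open scoped BigOperators Classical

/-- Output distribution `V_P`. -/
noncomputable def outDist {A B : Type} [Fintype A] (P : A → ℝ) (V : A → B → ℝ) (y : B) : ℝ :=
  ∑ x, P x * V x y

/-- Inductive removal of earlier sets: `decAux A i = A i \ (decAux A 0 ∪ ⋯ ∪ decAux A (i-1))`. -/
noncomputable def decAux {Y : Type} (A : ℕ → Finset Y) : ℕ → Finset Y
  | i => A i \ (Finset.range i).attach.biUnion (fun j => decAux A j.1)
  decreasing_by exact Finset.mem_range.mp j.2

/-- The decoding sets of the threshold decoder:
`D_i(z) = { y : V_{z_i}(y) > c·V_P(y) } \ (D_1(z) ∪ ⋯ ∪ D_{i-1}(z))`. -/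
noncomputable def decSet {X Y : Type} [Fintype X] [Fintype Y]
    (V : X → Y → ℝ) (P : X → ℝ) (c : ℝ) {N : ℕ} (z : Fin N → X) (i : Fin N) : Finset Y :=
  decAux (fun j =>
    if h : j < N then
      Finset.univ.filter (fun y => c * outDist P V y < V (z ⟨j, h⟩) y)
    else ∅) i.1

/-- Average error probability of the codebook `z` with the threshold decoder. -/
noncomputable def PeRC {X Y : Type} [Fintype X] [Fintype Y]
    (V : X → Y → ℝ) (P : X → ℝ) (c : ℝ) {N : ℕ} (z : Fin N → X) : ℝ :=
  (1 / (N : ℝ)) * ∑ i, (1 - ∑ y ∈ decSet V P c z i, V (z i) y)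

lemma decAux_subset {Y : Type} (A : ℕ → Finset Y) (i : ℕ) : decAux A i ⊆ A i := by
  rw [decAux]; exact Finset.sdiff_subset

lemma decAux_congr {Y : Type} (A A' : ℕ → Finset Y) :
    ∀ i, (∀ k ≤ i, A k = A' k) → decAux A i = decAux A' i := by
  intro i
  induction i using Nat.strong_induction_on with
  | _ i ih =>
    intro h
    rw [decAux, decAux, h i le_rfl]
    congr 1
    apply Finset.biUnion_congr rfl
    intro j _
    exact ih j.1 (Finset.mem_range.mp j.2)
      (fun k hk => h k (hk.trans (le_of_lt (Finset.mem_range.mp j.2))))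

lemma decAux_disjoint {Y : Type} (A : ℕ → Finset Y) {j k : ℕ} (hjk : j < k) :
    Disjoint (decAux A j) (decAux A k) := by
  refine Finset.disjoint_left.mpr fun y hyj hyk => ?_
  rw [decAux] at hyk
  exact (Finset.mem_sdiff.mp hyk).2
    (Finset.mem_biUnion.mpr ⟨⟨j, Finset.mem_range.mpr hjk⟩, Finset.mem_attach _ _, hyj⟩)

lemma decSet_congr {X Y : Type} [Fintype X] [Fintype Y]
    (V : X → Y → ℝ) (P : X → ℝ) (c : ℝ) {N : ℕ} (z z' : Fin N → X) (i : Fin N)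
    (h : ∀ k : Fin N, k.1 ≤ i.1 → z k = z' k) :
    decSet V P c z i = decSet V P c z' i := by
  unfold decSet
  apply decAux_congr
  intro k hk
  by_cases hkN : k < N
  · rw [dif_pos hkN, dif_pos hkN, h ⟨k, hkN⟩ hk]
  · rw [dif_neg hkN, dif_neg hkN]

lemma sum_V_nonneg {X Y : Type} [Fintype Y] {V : X → Y → ℝ} (hV : IsChannel V)
    (x : X) (S : Finset Y) : 0 ≤ ∑ y ∈ S, V x y :=
  Finset.sum_nonneg fun y _ => (hV x).1 y

lemma sum_V_le_one {X Y : Type} [Fintype Y] {V : X → Y → ℝ} (hV : IsChannel V)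
    (x : X) (S : Finset Y) : ∑ y ∈ S, V x y ≤ 1 := by
  rw [← (hV x).2]
  exact Finset.sum_le_sum_of_subset_of_nonneg (Finset.subset_univ S)
    (fun y _ _ => (hV x).1 y)

/-- On any decoding set, the output distribution has mass at most `1/c`. -/
lemma sum_outDist_decSet_le {X Y : Type} [Fintype X] [Fintype Y]
    {V : X → Y → ℝ} (hV : IsChannel V) (P : X → ℝ) {c : ℝ} (hc : 0 < c)
    {N : ℕ} (z : Fin N → X) (i : Fin N) :
    ∑ y ∈ decSet V P c z i, outDist P V y ≤ 1 / c := by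
  have hsub : decSet V P c z i ⊆
      Finset.univ.filter (fun y => c * outDist P V y < V (z i) y) := by
    refine (decAux_subset _ _).trans ?_
    rw [dif_pos i.2]
  have h1 : ∑ y ∈ decSet V P c z i, outDist P V y ≤
      ∑ y ∈ decSet V P c z i, V (z i) y / c := by
    refine Finset.sum_le_sum fun y hy => ?_
    have := (Finset.mem_filter.mp (hsub hy)).2
    rw [le_div_iff₀ hc, mul_comm]
    exact this.le
  calc ∑ y ∈ decSet V P c z i, outDist P V y ≤ ∑ y ∈ decSet V P c z i, V (z i) y / c := h1
    _ = (∑ y ∈ decSet V P c z i, V (z i) y) / c := by rw [Finset.sum_div]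
    _ ≤ 1 / c := by gcongr; exact sum_V_le_one hV _ _

lemma exp_split {X : Type} [Fintype X] [Nonempty X] (P : X → ℝ) {N : ℕ} (i : Fin N)
    (F : (Fin N → X) → ℝ) (G : X → ℝ)
    (hF : ∀ z x, F (Function.update z i x) = F z) :
    ∑ z : Fin N → X, (∏ k, P (z k)) * (F z * G (z i)) =
      (∑ x, P x * G x) *
        ∑ w : {j : Fin N // j ≠ i} → X, (∏ j, P (w j)) *
          F ((Equiv.funSplitAt i X).symm (Classical.arbitrary X, w)) := by
  set e := Equiv.funSplitAt i X with he
  set x₀ := Classical.arbitrary X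
  rw [← Equiv.sum_comp e.symm, Fintype.sum_prod_type]
  have key : ∀ (x : X) (w : {j : Fin N // j ≠ i} → X),
      (∏ k, P (e.symm (x, w) k)) * (F (e.symm (x, w)) * G (e.symm (x, w) i)) =
        (P x * G x) * ((∏ j, P (w j)) * F (e.symm (x₀, w))) := by
    intro x w
    have happ : ∀ (x' : X) (k : Fin N), e.symm (x', w) k = if h : k = i then x' else w ⟨k, h⟩ := by
      intro x' k; simp [he, Equiv.funSplitAt, Equiv.piSplitAt]
    have hii : ∀ x' : X, e.symm (x', w) i = x' := by intro x'; rw [happ, dif_pos rfl]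
    have hupd : e.symm (x, w) = Function.update (e.symm (x₀, w)) i x := by
      funext k
      by_cases h : k = i
      · subst h; rw [Function.update_self, hii]
      · rw [Function.update_of_ne h, happ, happ, dif_neg h, dif_neg h]
    have hprod : ∀ x' : X, (∏ k, P (e.symm (x', w) k)) = P x' * ∏ j, P (w j) := by
      intro x'
      rw [Fintype.prod_eq_mul_prod_compl i, hii]
      congr 1
      rw [Finset.prod_subtype ({i}ᶜ : Finset (Fin N)) (p := fun j => j ≠ i) (by simp)]
      refine Finset.prod_congr rfl fun j _ => ?_
      rw [happ, dif_neg j.2]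
    rw [hprod, hupd, hF, Function.update_self]
    ring
  simp only [key]
  rw [← Finset.sum_mul_sum]

/-- Random coding bound: the expected average error probability over codebooks drawn
i.i.d. from `P` is at most
`Σ_x P(x) V_x{ y : V_x(y) ≤ c·V_P(y) } + N/(2c)`. -/
theorem random_coding_bound
    {X Y : Type} [Fintype X] [Fintype Y]
    (V : X → Y → ℝ) (hV : IsChannel V)
    (P : X → ℝ) (hP : IsDist P)
    (N : ℕ) (hN : 1 ≤ N) (c : ℝ) (hc : 0 < c) :
    ∑ z : Fin N → X, (∏ i, P (z i)) * PeRC V P c z ≤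
      (∑ x, P x * ∑ y ∈ Finset.univ.filter (fun y => V x y ≤ c * outDist P V y), V x y) +
        N / (2 * c) := by
  obtain ⟨hP0, hP1⟩ := hP
  set Bad : X → Finset Y := fun x => Finset.univ.filter (fun y => V x y ≤ c * outDist P V y)
    with hBadDef
  set T1 : ℝ := ∑ x, P x * ∑ y ∈ Bad x, V x y with hT1Def
  have hT1nn : 0 ≤ T1 :=
    Finset.sum_nonneg fun x _ => mul_nonneg (hP0 x) (sum_V_nonneg hV x _)
  rcases isEmpty_or_nonempty X with hX | hX
  · have h0 : ∑ z : Fin N → X, (∏ i, P (z i)) * PeRC V P c z = 0 :=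
      Finset.sum_eq_zero fun z _ => (hX.false (z ⟨0, hN⟩)).elim
    rw [h0]
    have h1 : (0:ℝ) ≤ (N:ℝ) / (2 * c) := by positivity
    linarith
  -- main case
  have hprodnn : ∀ z : Fin N → X, 0 ≤ ∏ k, P (z k) :=
    fun z => Finset.prod_nonneg fun k _ => hP0 _
  have hNpos : (0:ℝ) < (N:ℝ) := by exact_mod_cast hN
  have hw1 : ∀ i : Fin N, ∑ w : {j : Fin N // j ≠ i} → X, ∏ j, P (w j) = 1 := by
    intro i
    rw [← Fintype.piFinset_univ, Finset.sum_prod_piFinset]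
    simp [hP1]
  have hind : ∀ (S : Finset Y) (g : Y → ℝ),
      ∑ y : Y, (if y ∈ S then (1:ℝ) else 0) * g y = ∑ y ∈ S, g y := by
    intro S g
    simp only [ite_mul, one_mul, zero_mul]
    rw [Finset.sum_ite_mem, Finset.univ_inter]
  -- expectation of the first term
  have hfirst : ∀ i : Fin N,
      ∑ z : Fin N → X, (∏ k, P (z k)) * (∑ y ∈ Bad (z i), V (z i) y) = T1 := by
    intro i
    have h := exp_split P i (fun _ => (1:ℝ)) (fun x => ∑ y ∈ Bad x, V x y) (fun _ _ => rfl)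
    simp only [one_mul, mul_one] at h
    rw [h, hw1 i, mul_one, hT1Def]
  -- expectation of cross terms
  have hcross : ∀ (i jj : Fin N), jj.1 < i.1 →
      ∑ z : Fin N → X, (∏ k, P (z k)) * (∑ y ∈ decSet V P c z jj, V (z i) y) ≤ 1 / c := by
    intro i jj hj
    have hinv : ∀ (y : Y) (z : Fin N → X) (x : X),
        (if y ∈ decSet V P c (Function.update z i x) jj then (1:ℝ) else 0) =
        (if y ∈ decSet V P c z jj then (1:ℝ) else 0) := by
      intro y z x
      have hds : decSet V P c (Function.update z i x) jj = decSet V P c z jj := by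
        apply decSet_congr
        intro k hk
        have hki : k ≠ i := by
          intro h; subst h; exact lt_irrefl _ (lt_of_le_of_lt hk hj)
        rw [Function.update_of_ne hki]
      rw [hds]
    calc ∑ z : Fin N → X, (∏ k, P (z k)) * (∑ y ∈ decSet V P c z jj, V (z i) y)
        = ∑ z : Fin N → X, ∑ y : Y, (∏ k, P (z k)) *
            ((if y ∈ decSet V P c z jj then (1:ℝ) else 0) * V (z i) y) := by
          refine Finset.sum_congr rfl fun z _ => ?_
          rw [← hind (decSet V P c z jj) (fun y => V (z i) y), Finset.mul_sum]
      _ = ∑ y : Y, ∑ z : Fin N → X, (∏ k, P (z k)) *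
            ((if y ∈ decSet V P c z jj then (1:ℝ) else 0) * V (z i) y) := Finset.sum_comm
      _ = ∑ y : Y, (∑ x, P x * V x y) *
            ∑ w : {j : Fin N // j ≠ i} → X, (∏ j, P (w j)) *
              (if y ∈ decSet V P c ((Equiv.funSplitAt i X).symm (Classical.arbitrary X, w)) jj
                then (1:ℝ) else 0) := by
          refine Finset.sum_congr rfl fun y _ => ?_
          exact exp_split P i
            (fun z => if y ∈ decSet V P c z jj then (1:ℝ) else 0) (fun x => V x y) (hinv y)
      _ = ∑ w : {j : Fin N // j ≠ i} → X, ∑ y : Y, (∏ j, P (w j)) *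
            ((if y ∈ decSet V P c ((Equiv.funSplitAt i X).symm (Classical.arbitrary X, w)) jj
              then (1:ℝ) else 0) * outDist P V y) := by
          rw [Finset.sum_comm]
          refine Finset.sum_congr rfl fun y _ => ?_
          rw [Finset.mul_sum]
          refine Finset.sum_congr rfl fun w _ => ?_
          simp only [outDist]
          ring
      _ = ∑ w : {j : Fin N // j ≠ i} → X, (∏ j, P (w j)) *
            ∑ y ∈ decSet V P c ((Equiv.funSplitAt i X).symm (Classical.arbitrary X, w)) jj,
              outDist P V y := by
          refine Finset.sum_congr rfl fun w _ => ?_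
          rw [← Finset.mul_sum, hind]
      _ ≤ ∑ w : {j : Fin N // j ≠ i} → X, (∏ j, P (w j)) * (1 / c) := by
          refine Finset.sum_le_sum fun w _ => ?_
          exact mul_le_mul_of_nonneg_left (sum_outDist_decSet_le hV P hc _ jj)
            (Finset.prod_nonneg fun j _ => hP0 _)
      _ = 1 / c := by rw [← Finset.sum_mul, hw1 i, one_mul]
  -- pointwise bound
  have hptwise : ∀ (i : Fin N) (z : Fin N → X),
      1 - ∑ y ∈ decSet V P c z i, V (z i) y ≤
        (∑ y ∈ Bad (z i), V (z i) y) +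
          ∑ j ∈ (Finset.range i.1).attach,
            ∑ y ∈ decSet V P c z ⟨j.1, lt_trans (Finset.mem_range.mp j.2) i.2⟩, V (z i) y := by
    intro i z
    set A : ℕ → Finset Y := fun j =>
      if h : j < N then Finset.univ.filter (fun y => c * outDist P V y < V (z ⟨j, h⟩) y)
      else ∅ with hA
    have hdec : ∀ k : Fin N, decSet V P c z k = decAux A k.1 := fun _ => rfl
    set B : Finset Y := (Finset.range i.1).attach.biUnion (fun j => decAux A j.1) with hB
    have hD : decAux A i.1 = A i.1 \ B := by rw [decAux]
    have h1 : ∑ y ∈ A i.1, V (z i) y ≤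
        (∑ y ∈ decAux A i.1, V (z i) y) + ∑ y ∈ B, V (z i) y := by
      have hsub : A i.1 ⊆ (A i.1 \ B) ∪ B := by
        intro y hy
        by_cases hyB : y ∈ B
        · exact Finset.mem_union_right _ hyB
        · exact Finset.mem_union_left _ (Finset.mem_sdiff.mpr ⟨hy, hyB⟩)
      calc ∑ y ∈ A i.1, V (z i) y ≤ ∑ y ∈ (A i.1 \ B) ∪ B, V (z i) y :=
            Finset.sum_le_sum_of_subset_of_nonneg hsub (fun y _ _ => (hV (z i)).1 y)
        _ = (∑ y ∈ A i.1 \ B, V (z i) y) + ∑ y ∈ B, V (z i) y :=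
            Finset.sum_union Finset.sdiff_disjoint
        _ = (∑ y ∈ decAux A i.1, V (z i) y) + ∑ y ∈ B, V (z i) y := by rw [hD]
    have h2 : ∑ y ∈ B, V (z i) y =
        ∑ j ∈ (Finset.range i.1).attach, ∑ y ∈ decAux A j.1, V (z i) y := by
      rw [hB]
      refine Finset.sum_biUnion ?_
      intro j _ k _ hjk
      rcases lt_or_gt_of_ne (show j.1 ≠ k.1 from fun h => hjk (Subtype.ext h)) with h | h
      · exact decAux_disjoint A h
      · exact (decAux_disjoint A h).symm
    have h3 : (∑ y ∈ A i.1, V (z i) y) + ∑ y ∈ Bad (z i), V (z i) y = 1 := by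
      have hAi : A i.1 = Finset.univ.filter (fun y => c * outDist P V y < V (z i) y) := by
        simp only [hA]
        rw [dif_pos i.2]
      have hBadi : Bad (z i) =
          Finset.univ.filter (fun y => ¬ (c * outDist P V y < V (z i) y)) := by
        rw [hBadDef]
        exact Finset.filter_congr fun y _ => by rw [not_lt]
      rw [hAi, hBadi, Finset.sum_filter_add_sum_filter_not]
      exact (hV (z i)).2
    have hgoal : ∀ j : {x // x ∈ Finset.range i.1},
        decSet V P c z ⟨j.1, lt_trans (Finset.mem_range.mp j.2) i.2⟩ = decAux A j.1 :=
      fun j => rfl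
    simp only [hdec, hgoal]
    linarith [h1, h2, h3]
  -- per-codeword expectation bound
  have hi : ∀ i : Fin N,
      ∑ z : Fin N → X, (∏ k, P (z k)) * (1 - ∑ y ∈ decSet V P c z i, V (z i) y) ≤
        T1 + (i.1 : ℝ) * (1 / c) := by
    intro i
    calc ∑ z : Fin N → X, (∏ k, P (z k)) * (1 - ∑ y ∈ decSet V P c z i, V (z i) y)
        ≤ ∑ z : Fin N → X, (∏ k, P (z k)) *
            ((∑ y ∈ Bad (z i), V (z i) y) +
              ∑ j ∈ (Finset.range i.1).attach,
                ∑ y ∈ decSet V P c z ⟨j.1, lt_trans (Finset.mem_range.mp j.2) i.2⟩,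
                  V (z i) y) :=
          Finset.sum_le_sum fun z _ =>
            mul_le_mul_of_nonneg_left (hptwise i z) (hprodnn z)
      _ = (∑ z : Fin N → X, (∏ k, P (z k)) * ∑ y ∈ Bad (z i), V (z i) y) +
            ∑ j ∈ (Finset.range i.1).attach, ∑ z : Fin N → X, (∏ k, P (z k)) *
              ∑ y ∈ decSet V P c z ⟨j.1, lt_trans (Finset.mem_range.mp j.2) i.2⟩,
                V (z i) y := by
          rw [← Finset.sum_comm (γ := Fin N → X)]
          rw [← Finset.sum_add_distrib]
          refine Finset.sum_congr rfl fun z _ => ?_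
          rw [mul_add]
          congr 1
          rw [Finset.mul_sum]
      _ ≤ T1 + ∑ j ∈ (Finset.range i.1).attach, (1 / c) := by
          rw [hfirst i]
          refine add_le_add_right (Finset.sum_le_sum fun j _ => ?_) T1
          exact hcross i ⟨j.1, lt_trans (Finset.mem_range.mp j.2) i.2⟩
            (Finset.mem_range.mp j.2)
      _ = T1 + (i.1 : ℝ) * (1 / c) := by
          rw [Finset.sum_const, Finset.card_attach, Finset.card_range, nsmul_eq_mul]
  -- assemble
  have lhs_eq : ∑ z : Fin N → X, (∏ k, P (z k)) * PeRC V P c z =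
      (1 / (N:ℝ)) * ∑ i : Fin N, ∑ z : Fin N → X,
        (∏ k, P (z k)) * (1 - ∑ y ∈ decSet V P c z i, V (z i) y) := by
    simp only [PeRC, Finset.mul_sum]
    rw [Finset.sum_comm]
    exact Finset.sum_congr rfl fun i _ => Finset.sum_congr rfl fun z _ => by ring
  set S : ℝ := ∑ i : Fin N, ((i.1 : ℕ) : ℝ) with hSdef
  have hS : S * 2 = (N:ℝ) * ((N:ℝ) - 1) := by
    have h1 : S = ∑ k ∈ Finset.range N, (k:ℝ) :=
      Fin.sum_univ_eq_sum_range (fun k => (k:ℝ)) N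
    have h2 := Finset.sum_range_id_mul_two N
    have h3 : ((((∑ k ∈ Finset.range N, k) * 2 : ℕ)) : ℝ) = ((N * (N - 1) : ℕ) : ℝ) := by
      rw [h2]
    push_cast [Nat.cast_sub hN] at h3
    rw [h1]
    linarith
  rw [lhs_eq]
  calc (1 / (N:ℝ)) * ∑ i : Fin N, ∑ z : Fin N → X,
        (∏ k, P (z k)) * (1 - ∑ y ∈ decSet V P c z i, V (z i) y)
      ≤ (1 / (N:ℝ)) * ∑ i : Fin N, (T1 + (i.1 : ℝ) * (1 / c)) := by
        refine mul_le_mul_of_nonneg_left (Finset.sum_le_sum fun i _ => hi i) (by positivity)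
    _ = (1 / (N:ℝ)) * ((N:ℝ) * T1 + S * (1 / c)) := by
        rw [Finset.sum_add_distrib, Finset.sum_const, Finset.card_univ, Fintype.card_fin,
          nsmul_eq_mul, ← Finset.sum_mul]
    _ ≤ T1 + (N:ℝ) / (2 * c) := by
        rw [mul_add, ← mul_assoc, one_div_mul_cancel hNpos.ne', one_mul]
        refine add_le_add_right ?_ T1
        rw [show (1/(N:ℝ)) * (S * (1/c)) = S / ((N:ℝ) * c) by field_simp,
          div_le_div_iff₀ (by positivity) (by positivity)]
        nlinarith [hS, hc.le, hNpos, mul_nonneg hNpos.le hc.le, mul_pos hNpos hc]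
end
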